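/- For every nonnegative integer k and every x ∈ ℍ with Im(x) ≠ 0, the power function f(x) = xᵏ satisfies θ̄(xᵏ) = 0 and θ(xᵏ) = k·x^{k-1}, where θ and θ̄ are the global operators θ = ½(∂/∂x₀ + (Im x)⁻¹ Σᵢ₌₁³ xᵢ ∂/∂xᵢ), θ̄ = ½(∂/∂x₀ - (Im x)⁻¹ Σᵢ₌₁³ xᵢ ∂/∂xᵢ). -/

import Mathlib

def qi : Quaternion ℝ := ⟨0, 1, 0, 0⟩
def qj : Quaternion ℝ := ⟨0, 0, 1, 0⟩
def qk : Quaternion ℝ := ⟨0, 0, 0, 1⟩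

/-- The global operator `θ = ½(∂/∂x₀ + (Im x)⁻¹ Σᵢ xᵢ ∂/∂xᵢ)`. -/
noncomputable def theta (f : Quaternion ℝ → Quaternion ℝ) (x : Quaternion ℝ) : Quaternion ℝ :=
  (1 / 2 : ℝ) • (fderiv ℝ f x 1 +
    (x.im)⁻¹ * (x.imI • fderiv ℝ f x qi + x.imJ • fderiv ℝ f x qj + x.imK • fderiv ℝ f x qk))

/-- The global operator `θ̄ = ½(∂/∂x₀ - (Im x)⁻¹ Σᵢ xᵢ ∂/∂xᵢ)`. -/
noncomputable def thetaBar (f : Quaternion ℝ → Quaternion ℝ) (x : Quaternion ℝ) : Quaternion ℝ :=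
  (1 / 2 : ℝ) • (fderiv ℝ f x 1 -
    (x.im)⁻¹ * (x.imI • fderiv ℝ f x qi + x.imJ • fderiv ℝ f x qj + x.imK • fderiv ℝ f x qk))

lemma key (k : ℕ) (x : Quaternion ℝ) :
    ∃ L : Quaternion ℝ →L[ℝ] Quaternion ℝ,
      HasFDerivAt (fun y : Quaternion ℝ => y ^ (k + 1)) L x ∧
      ∀ c : Quaternion ℝ, Commute c x → L c = c * (((k : Quaternion ℝ) + 1) * x ^ k) := by
  induction k with
  | zero =>
    refine ⟨ContinuousLinearMap.id ℝ _, ?_, ?_⟩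
    · simp; exact hasFDerivAt_id x
    · intro c _; simp
  | succ n ih =>
    obtain ⟨L, hL, hLc⟩ := ih
    refine ⟨x ^ (n + 1) • ContinuousLinearMap.id ℝ _ + L.smulRight x, ?_, ?_⟩
    · have h := hL.mul' (hasFDerivAt_id x)
      have hf : (fun y : Quaternion ℝ => y ^ (n + 1) * y) = fun y => y ^ (n + 1 + 1) := by
        funext y; rw [← pow_succ]
      simp only [id_eq] at h
      rw [show MulOpposite.op x • L = L.smulRight x from ContinuousLinearMap.ext fun c => by simp] at h; rw [← hf]
      exact h
    · intro c hc
      have hcx : x ^ (n + 1) * c = c * x ^ (n + 1) := ((hc.symm).pow_left (n + 1))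
      simp only [ContinuousLinearMap.add_apply, ContinuousLinearMap.smul_apply,
        ContinuousLinearMap.smulRight_apply, ContinuousLinearMap.id_apply, smul_eq_mul,
        hLc c hc]
      push_cast
      rw [hcx, mul_assoc c, mul_assoc ((n : Quaternion ℝ) + 1), ← pow_succ, ← mul_add]
      noncomm_ring

theorem theta_pow (k : ℕ) (x : Quaternion ℝ) (hx : x.im ≠ 0) :
    thetaBar (fun y => y ^ k) x = 0 ∧
    theta (fun y => y ^ k) x = (k : Quaternion ℝ) * x ^ (k - 1) := by
  cases k with
  | zero =>
    constructor <;> simp [theta, thetaBar, fderiv_fun_const]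
  | succ n =>
    obtain ⟨L, hL, hLc⟩ := key n x
    have hfd : fderiv ℝ (fun y : Quaternion ℝ => y ^ (n + 1)) x = L := hL.fderiv
    have him : x.im = x.imI • qi + x.imJ • qj + x.imK • qk := by
      ext <;> simp [qi, qj, qk, QuaternionAlgebra.im] <;> show (_ : ℝ) = x.imI * _ + x.imJ * _ + x.imK * _ <;> simp
    have com : Commute x.im x := by
      unfold Commute SemiconjBy
      ext <;> simp [QuaternionAlgebra.im] <;> ring
    have hsum : x.imI • L qi + x.imJ • L qj + x.imK • L qk = L x.im := by
      rw [him]; simp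
    have hL1 : L 1 = ((n : Quaternion ℝ) + 1) * x ^ n := by
      rw [hLc 1 (Commute.one_left x), one_mul]
    have hLim : (x.im)⁻¹ * L x.im = ((n : Quaternion ℝ) + 1) * x ^ n := by
      rw [hLc x.im com, ← mul_assoc, inv_mul_cancel₀ hx, one_mul]
    constructor
    · rw [thetaBar, hfd, hsum, hLim, hL1, sub_self, smul_zero]
    · rw [theta, hfd, hsum, hLim, hL1, ← two_smul ℝ, smul_smul]
      norm_num
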